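/- If a two-dimensional torus is endowed with a flat metric, then the normalized first eigenvalue λ₁·area is at most 8π²/√3, with equality for the flat equilateral torus. -/

import Mathlib

open Real

namespace BergerAux

/-- The quadratic form `‖B·(x,y)‖²` for the matrix with rows `(p,q)`, `(r,s)`,
evaluated at the integer vector `(x,y)`. -/
noncomputable def qf (p q r s : ℝ) (x y : ℤ) : ℝ :=
  (p * x + q * y) ^ 2 + (r * x + s * y) ^ 2

lemma qf_nonneg (p q r s : ℝ) (x y : ℤ) : 0 ≤ qf p q r s x y := by
  unfold qf; positivity

lemma qf_pos (p q r s : ℝ) (hd : p * s - q * r ≠ 0) {x y : ℤ}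
    (h : ¬(x = 0 ∧ y = 0)) : 0 < qf p q r s x y := by
  rcases lt_or_eq_of_le (qf_nonneg p q r s x y) with h' | h'
  · exact h'
  exfalso
  unfold qf at h'
  have e1 : (p * x + q * y) ^ 2 = 0 := by nlinarith [sq_nonneg (r * x + s * y)]
  have e2 : (r * x + s * y) ^ 2 = 0 := by nlinarith [sq_nonneg (p * x + q * y)]
  have h11 : p * x + q * y = 0 := by
    have := pow_eq_zero_iff (n := 2) (by norm_num) |>.mp e1; exact this
  have h12 : r * x + s * y = 0 := by
    have := pow_eq_zero_iff (n := 2) (by norm_num) |>.mp e2; exact this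
  have hx : (p * s - q * r) * x = 0 := by linear_combination s * h11 - q * h12
  have hy : (p * s - q * r) * y = 0 := by linear_combination p * h12 - r * h11
  have hx0 : (x : ℝ) = 0 := by
    rcases mul_eq_zero.mp hx with h | h
    · exact absurd h hd
    · exact h
  have hy0 : (y : ℝ) = 0 := by
    rcases mul_eq_zero.mp hy with h | h
    · exact absurd h hd
    · exact h
  exact h ⟨by exact_mod_cast hx0, by exact_mod_cast hy0⟩

/-- Existence of a shortest nonzero lattice vector. -/
lemma exists_min (p q r s : ℝ) (hd : p * s - q * r ≠ 0) :
    ∃ v : ℤ × ℤ, ¬(v.1 = 0 ∧ v.2 = 0) ∧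
      ∀ x y : ℤ, ¬(x = 0 ∧ y = 0) → qf p q r s v.1 v.2 ≤ qf p q r s x y := by
  set C : ℝ := qf p q r s 1 0 with hC
  set T : Set (ℤ × ℤ) := {v | ¬(v.1 = 0 ∧ v.2 = 0) ∧ qf p q r s v.1 v.2 ≤ C} with hT
  have hne : T.Nonempty := ⟨(1, 0), by simp [hT], le_refl _⟩
  -- bound coordinates of elements of T
  obtain ⟨N, hN⟩ : ∃ N : ℤ, ∀ v ∈ T, |v.1| ≤ N ∧ |v.2| ≤ N := by
    have hd2 : (0:ℝ) < (p * s - q * r)^2 := by positivity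
    refine ⟨⌈(2 * (s^2 + q^2) * C) / (p*s - q*r)^2⌉ ⊔ ⌈(2 * (r^2 + p^2) * C) / (p*s - q*r)^2⌉, ?_⟩
    rintro ⟨x, y⟩ ⟨-, hv⟩
    have hCnn : 0 ≤ C := qf_nonneg p q r s 1 0
    have h1 : (p * x + q * y) ^ 2 ≤ C := by
      unfold qf at hv; nlinarith [sq_nonneg (r * x + s * y)]
    have h2 : (r * x + s * y) ^ 2 ≤ C := by
      unfold qf at hv; nlinarith [sq_nonneg (p * x + q * y)]
    have hx : ((x:ℝ))^2 ≤ (2 * (s^2 + q^2) * C) / (p*s - q*r)^2 := by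
      rw [le_div_iff₀ hd2]
      have key : ((p*s - q*r) * x)^2 = (s * (p * x + q * y) - q * (r * x + s * y))^2 := by ring
      nlinarith [sq_nonneg (s * (p * x + q * y) + q * (r * x + s * y)), sq_nonneg s, sq_nonneg q,
        mul_le_mul_of_nonneg_left h1 (sq_nonneg s), mul_le_mul_of_nonneg_left h2 (sq_nonneg q)]
    have hy : ((y:ℝ))^2 ≤ (2 * (r^2 + p^2) * C) / (p*s - q*r)^2 := by
      rw [le_div_iff₀ hd2]
      nlinarith [mul_le_mul_of_nonneg_left h1 (sq_nonneg r), mul_le_mul_of_nonneg_left h2 (sq_nonneg p),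
        sq_nonneg (r * (p * x + q * y) + p * (r * x + s * y))]
    constructor
    · have : ((x:ℝ))^2 ≤ (⌈(2 * (s^2 + q^2) * C) / (p*s - q*r)^2⌉ : ℝ) := hx.trans (Int.le_ceil _)
      have hx2 : x^2 ≤ ⌈(2 * (s^2 + q^2) * C) / (p*s - q*r)^2⌉ := by exact_mod_cast this
      have : |x| ≤ x^2 := by nlinarith [abs_nonneg x, sq_abs x, abs_nonneg x]
      exact le_sup_of_le_left (this.trans hx2)
    · have : ((y:ℝ))^2 ≤ (⌈(2 * (r^2 + p^2) * C) / (p*s - q*r)^2⌉ : ℝ) := hy.trans (Int.le_ceil _)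
      have hy2 : y^2 ≤ ⌈(2 * (r^2 + p^2) * C) / (p*s - q*r)^2⌉ := by exact_mod_cast this
      have : |y| ≤ y^2 := by nlinarith [abs_nonneg y, sq_abs y]
      exact le_sup_of_le_right (this.trans hy2)
  have hfin : T.Finite := by
    apply Set.Finite.subset (Set.finite_Icc (-N, -N) (N, N))
    rintro ⟨x, y⟩ hv
    obtain ⟨h1, h2⟩ := hN _ hv
    rw [abs_le] at h1 h2
    exact ⟨⟨h1.1, h2.1⟩, ⟨h1.2, h2.2⟩⟩
  obtain ⟨v, hvT, hvmin⟩ := Set.exists_min_image T (fun v => qf p q r s v.1 v.2) hfin hne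
  refine ⟨v, hvT.1, fun x y hxy => ?_⟩
  by_cases h : qf p q r s x y ≤ C
  · exact hvmin (x, y) ⟨hxy, h⟩
  · exact hvT.2.trans (le_of_not_ge h)

set_option maxHeartbeats 1000000 in
/-- Hermite's bound in dimension two. -/
lemma hermite (p q r s : ℝ) (hd : p * s - q * r ≠ 0) :
    ∃ x y : ℤ, ¬(x = 0 ∧ y = 0) ∧
      qf p q r s x y ≤ 2 * |p * s - q * r| / Real.sqrt 3 := by
  obtain ⟨⟨a, b⟩, hv0, hmin⟩ := exists_min p q r s hd
  simp only at hv0 hmin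
  have hα : 0 < qf p q r s a b := qf_pos p q r s hd hv0
  -- the minimizer is primitive
  have hg : Int.gcd a b = 1 := by
    set g : ℕ := Int.gcd a b with hgdef
    obtain ⟨a₁, ha⟩ : (g : ℤ) ∣ a := Int.gcd_dvd_left a b
    obtain ⟨b₁, hb⟩ : (g : ℤ) ∣ b := Int.gcd_dvd_right a b
    have hg0 : g ≠ 0 := by
      intro h0
      have := Int.gcd_eq_zero_iff.mp (hgdef ▸ h0)
      exact hv0 ⟨this.1, this.2⟩
    have hab1 : ¬(a₁ = 0 ∧ b₁ = 0) := by
      rintro ⟨h1, h2⟩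
      exact hv0 ⟨by simp [ha, h1], by simp [hb, h2]⟩
    have hscale : qf p q r s a b = (g:ℝ)^2 * qf p q r s a₁ b₁ := by
      unfold qf; rw [ha, hb]; push_cast; ring
    have h1 : qf p q r s a b ≤ qf p q r s a₁ b₁ := hmin a₁ b₁ hab1
    have hq1 : 0 < qf p q r s a₁ b₁ := qf_pos p q r s hd hab1
    have hgle : (g:ℝ)^2 ≤ 1 := by nlinarith
    have : g ≤ 1 := by
      by_contra hgt
      push_neg at hgt
      have : (2:ℝ) ≤ (g:ℝ) := by exact_mod_cast hgt
      nlinarith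
    omega
  obtain ⟨u, w, huw⟩ := Int.isCoprime_iff_gcd_eq_one.mpr hg
  -- basis completion: a * d₁ - b * c = 1
  set c : ℤ := -w with hc
  set d₁ : ℤ := u with hd₁
  have hdet : a * d₁ - b * c = 1 := by rw [hc, hd₁]; linarith [huw]
  set α : ℝ := qf p q r s a b with hαdef
  set β : ℝ := (p*a+q*b)*(p*c+q*d₁) + (r*a+s*b)*(r*c+s*d₁) with hβdef
  set k : ℤ := round (-β / α) with hk
  set w0 : ℤ := c + k * a with hw0
  set w1 : ℤ := d₁ + k * b with hw1
  have hdet' : a * w1 - b * w0 = 1 := by rw [hw0, hw1]; linear_combination hdet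
  have hw'0 : ¬(w0 = 0 ∧ w1 = 0) := by
    rintro ⟨h1, h2⟩
    rw [h1, h2] at hdet'
    simp at hdet'
  set β' : ℝ := (p*a+q*b)*(p*w0+q*w1) + (r*a+s*b)*(r*w0+s*w1) with hβ'def
  have hβ' : β' = β + k * α := by
    rw [hβ'def, hβdef, hαdef]; unfold qf; push_cast [hw0, hw1]; ring
  have habs : |β'| ≤ α / 2 := by
    have hround : |(-β / α) - k| ≤ 1/2 := abs_sub_round _
    have hαne : α ≠ 0 := ne_of_gt hα
    have hre : β' = α * ((β / α) + k) := by rw [hβ']; field_simp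
    rw [hre, abs_mul, abs_of_pos hα]
    have : |(β / α) + k| = |(-β / α) - k| := by
      rw [← abs_neg]; congr 1; ring
    rw [this]
    calc α * |(-β / α) - k| ≤ α * (1/2) := by
          exact mul_le_mul_of_nonneg_left hround hα.le
      _ = α / 2 := by ring
  have hgram : α * qf p q r s w0 w1 - β'^2
      = (p*s - q*r)^2 * ((a:ℝ) * w1 - (b:ℝ) * w0)^2 := by
    rw [hαdef, hβ'def]; unfold qf; ring
  have hdetR : (a:ℝ) * w1 - (b:ℝ) * w0 = 1 := by exact_mod_cast congrArg (Int.cast : ℤ → ℝ) hdet'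
  rw [hdetR] at hgram
  have hminw : α ≤ qf p q r s w0 w1 := hmin w0 w1 hw'0
  have hβsq : β'^2 ≤ α^2/4 := by
    have h := abs_le.mp habs
    nlinarith [h.1, h.2]
  have h4 : α ^ 2 ≤ α * qf p q r s w0 w1 := by
    have := mul_le_mul_of_nonneg_left hminw hα.le
    calc α ^ 2 = α * α := sq α
      _ ≤ α * qf p q r s w0 w1 := this
  have hgram2 : α * qf p q r s w0 w1 - β' ^ 2 = (p*s - q*r)^2 := by
    rw [hgram]; ring
  clear_value β' w1 w0 k β d₁ c α
  have h3 : 3 * α^2 ≤ 4 * (p*s - q*r)^2 := by linarith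
  refine ⟨a, b, hv0, ?_⟩
  have s3 : (0:ℝ) < Real.sqrt 3 := Real.sqrt_pos.mpr (by norm_num)
  have s3sq : Real.sqrt 3 ^ 2 = 3 := Real.sq_sqrt (by norm_num)
  rw [le_div_iff₀ s3, ← hαdef]
  have hdpos : 0 < |p*s - q*r| := abs_pos.mpr hd
  nlinarith [sq_abs (p*s - q*r), sq_nonneg (α * Real.sqrt 3 - 2 * |p*s - q*r|), hα.le,
    hdpos, s3sq, s3.le, h3]

/-- The integer binary form `x² - xy + y²` takes values `≥ 1` at nonzero points. -/
lemma int_form_ge_one {m0 m1 : ℤ} (h : ¬(m0 = 0 ∧ m1 = 0)) :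
    1 ≤ m0^2 - m0*m1 + m1^2 := by
  by_contra hlt
  push_neg at hlt
  have h0 : m0^2 - m0*m1 + m1^2 ≤ 0 := by omega
  have hm1sq : m1^2 = 0 := by
    have h1 : m1^2 ≤ 0 := by nlinarith [sq_nonneg (2*m0 - m1)]
    exact le_antisymm h1 (sq_nonneg m1)
  have hm1 : m1 = 0 := by
    have := pow_eq_zero_iff (n := 2) (by norm_num) |>.mp hm1sq; exact this
  subst hm1
  have hm0sq : m0^2 = 0 := by
    have h1 : m0^2 ≤ 0 := by nlinarith
    exact le_antisymm h1 (sq_nonneg m0)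
  have hm0 : m0 = 0 := by
    have := pow_eq_zero_iff (n := 2) (by norm_num) |>.mp hm0sq; exact this
  exact h ⟨hm0, rfl⟩

end BergerAux

/-- The first nonzero eigenvalue of the flat torus `ℝ²/Λ`, where the lattice `Λ` is
spanned by the columns of the invertible matrix `A`.  The eigenvalues of the Laplacian
are `4π²‖ξ‖²` for `ξ` in the dual lattice, which is spanned by the columns of `(Aᵀ)⁻¹`. -/
noncomputable def flatTorusLambda1 (A : Matrix (Fin 2) (Fin 2) ℝ) : ℝ :=
  sInf {t : ℝ | ∃ m : Fin 2 → ℤ, m ≠ 0 ∧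
    t = 4 * π ^ 2 * (((A.transpose)⁻¹.mulVec (fun i => (m i : ℝ)) 0) ^ 2 +
      ((A.transpose)⁻¹.mulVec (fun i => (m i : ℝ)) 1) ^ 2)}

/-- The area of the flat torus `ℝ²/Λ` is the covolume `|det A|` of the lattice. -/
noncomputable def flatTorusArea (A : Matrix (Fin 2) (Fin 2) ℝ) : ℝ := |A.det|

/-- Berger's theorem: for every flat metric on the two-dimensional torus, the normalized
first eigenvalue `λ₁ · area` is at most `8π²/√3`, with equality for the flat equilateral
torus (whose lattice is spanned by `(1,0)` and `(1/2, √3/2)`). -/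
theorem flat_torus_lambda1_area_le :
    (∀ A : Matrix (Fin 2) (Fin 2) ℝ, IsUnit A.det →
      flatTorusLambda1 A * flatTorusArea A ≤ 8 * π ^ 2 / Real.sqrt 3) ∧
    flatTorusLambda1 !![1, 1/2; 0, Real.sqrt 3 / 2] *
      flatTorusArea !![1, 1/2; 0, Real.sqrt 3 / 2] = 8 * π ^ 2 / Real.sqrt 3 := by
  have s3 : (0:ℝ) < Real.sqrt 3 := Real.sqrt_pos.mpr (by norm_num)
  have s3ne : Real.sqrt 3 ≠ 0 := ne_of_gt s3
  have s3sq : Real.sqrt 3 * Real.sqrt 3 = 3 := Real.mul_self_sqrt (by norm_num)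
  constructor
  · -- the general upper bound
    intro A hA
    set B : Matrix (Fin 2) (Fin 2) ℝ := (A.transpose)⁻¹ with hB
    have hAdet : A.det ≠ 0 := hA.ne_zero
    have hBdet : B.det = (A.det)⁻¹ := by
      rw [hB, Matrix.det_nonsing_inv, Matrix.det_transpose, Ring.inverse_eq_inv']
    have hdB : B 0 0 * B 1 1 - B 0 1 * B 1 0 ≠ 0 := by
      rw [← Matrix.det_fin_two, hBdet]
      exact inv_ne_zero hAdet
    obtain ⟨x, y, hxy, hq⟩ := BergerAux.hermite (B 0 0) (B 0 1) (B 1 0) (B 1 1) hdB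
    have hbdd : BddBelow {t : ℝ | ∃ m : Fin 2 → ℤ, m ≠ 0 ∧
        t = 4 * π ^ 2 * ((B.mulVec (fun i => (m i : ℝ)) 0) ^ 2 +
          (B.mulVec (fun i => (m i : ℝ)) 1) ^ 2)} := by
      refine ⟨0, ?_⟩
      rintro t ⟨m, hm, rfl⟩
      positivity
    have hmem : 4 * π ^ 2 * BergerAux.qf (B 0 0) (B 0 1) (B 1 0) (B 1 1) x y ∈
        {t : ℝ | ∃ m : Fin 2 → ℤ, m ≠ 0 ∧
          t = 4 * π ^ 2 * ((B.mulVec (fun i => (m i : ℝ)) 0) ^ 2 +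
            (B.mulVec (fun i => (m i : ℝ)) 1) ^ 2)} := by
      refine ⟨![x, y], ?_, ?_⟩
      · intro h
        exact hxy ⟨by simpa using congrFun h 0, by simpa using congrFun h 1⟩
      · unfold BergerAux.qf
        simp [Matrix.mulVec, dotProduct, Fin.sum_univ_two]
    have h1 : flatTorusLambda1 A ≤
        4 * π ^ 2 * BergerAux.qf (B 0 0) (B 0 1) (B 1 0) (B 1 1) x y := by
      unfold flatTorusLambda1
      exact csInf_le hbdd hmem
    have habsB : |B 0 0 * B 1 1 - B 0 1 * B 1 0| = |A.det|⁻¹ := by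
      rw [← Matrix.det_fin_two, hBdet, abs_inv]
    have habsA : (0:ℝ) < |A.det| := abs_pos.mpr hAdet
    have h2 : BergerAux.qf (B 0 0) (B 0 1) (B 1 0) (B 1 1) x y ≤
        2 * |A.det|⁻¹ / Real.sqrt 3 := by rwa [habsB] at hq
    unfold flatTorusArea
    calc flatTorusLambda1 A * |A.det|
        ≤ (4 * π ^ 2 * BergerAux.qf (B 0 0) (B 0 1) (B 1 0) (B 1 1) x y) * |A.det| :=
          mul_le_mul_of_nonneg_right h1 (abs_nonneg _)
      _ ≤ (4 * π ^ 2 * (2 * |A.det|⁻¹ / Real.sqrt 3)) * |A.det| := by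
          apply mul_le_mul_of_nonneg_right _ (abs_nonneg _)
          exact mul_le_mul_of_nonneg_left h2 (by positivity)
      _ = 8 * π ^ 2 / Real.sqrt 3 := by
          field_simp
          ring
  · -- the equilateral torus attains the bound
    have htr : (!![1, 1/2; 0, Real.sqrt 3 / 2] : Matrix (Fin 2) (Fin 2) ℝ).transpose
        = !![1, 0; 1/2, Real.sqrt 3 / 2] := by
      ext i j
      fin_cases i <;> fin_cases j <;> simp
    have hinv : (!![1, 0; 1/2, Real.sqrt 3 / 2] : Matrix (Fin 2) (Fin 2) ℝ)⁻¹
        = !![1, 0; -(1/Real.sqrt 3), 2/Real.sqrt 3] := by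
      apply Matrix.inv_eq_right_inv
      rw [Matrix.mul_fin_two, Matrix.one_fin_two]
      congr 1 <;> field_simp <;> simp [s3ne]
    have hval : ∀ m : Fin 2 → ℤ,
        4 * π ^ 2 * (((!![1, 0; -(1/Real.sqrt 3), 2/Real.sqrt 3] :
            Matrix (Fin 2) (Fin 2) ℝ).mulVec (fun i => (m i : ℝ)) 0) ^ 2 +
          ((!![1, 0; -(1/Real.sqrt 3), 2/Real.sqrt 3] :
            Matrix (Fin 2) (Fin 2) ℝ).mulVec (fun i => (m i : ℝ)) 1) ^ 2)
        = 16 * π ^ 2 / 3 * (((m 0)^2 - m 0 * m 1 + (m 1)^2 : ℤ) : ℝ) := by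
      intro m
      have e0 : (!![1, 0; -(1/Real.sqrt 3), 2/Real.sqrt 3] :
          Matrix (Fin 2) (Fin 2) ℝ).mulVec (fun i => (m i : ℝ)) 0 = (m 0 : ℝ) := by
        simp [Matrix.mulVec, dotProduct, Fin.sum_univ_two]
      have e1 : (!![1, 0; -(1/Real.sqrt 3), 2/Real.sqrt 3] :
          Matrix (Fin 2) (Fin 2) ℝ).mulVec (fun i => (m i : ℝ)) 1
          = (2 * (m 1 : ℝ) - (m 0 : ℝ)) / Real.sqrt 3 := by
        simp only [Matrix.mulVec, dotProduct, Fin.sum_univ_two, Matrix.cons_val',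
          Matrix.cons_val_zero, Matrix.cons_val_one, Matrix.head_cons, Matrix.empty_val',
          Matrix.cons_val_fin_one, Matrix.of_apply, Matrix.head_fin_const]
        field_simp
        linear_combination
      rw [e0, e1, div_pow, Real.sq_sqrt (by norm_num : (0:ℝ) ≤ 3)]
      push_cast
      field_simp
      ring
    have hlam : flatTorusLambda1 !![1, 1/2; 0, Real.sqrt 3 / 2] = 16 * π ^ 2 / 3 := by
      unfold flatTorusLambda1
      rw [htr, hinv]
      apply le_antisymm
      · apply csInf_le
        · refine ⟨0, ?_⟩
          rintro t ⟨m, hm, rfl⟩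
          positivity
        · refine ⟨![1, 0], ?_, ?_⟩
          · intro h
            simpa using congrFun h 0
          · rw [hval ![1, 0]]
            norm_num
      · apply le_csInf
        · refine ⟨16 * π ^ 2 / 3, ![1, 0], ?_, ?_⟩
          · intro h
            simpa using congrFun h 0
          · rw [hval ![1, 0]]
            norm_num
        · rintro t ⟨m, hm, rfl⟩
          rw [hval m]
          have hne : ¬(m 0 = 0 ∧ m 1 = 0) := by
            rintro ⟨h0, h1⟩
            apply hm
            funext i
            fin_cases i <;> assumption
          have hint : 1 ≤ (m 0)^2 - m 0 * m 1 + (m 1)^2 := BergerAux.int_form_ge_one hne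
          have hintR : (1:ℝ) ≤ (((m 0)^2 - m 0 * m 1 + (m 1)^2 : ℤ) : ℝ) := by
            exact_mod_cast hint
          have hπ : (0:ℝ) < 16 * π ^ 2 / 3 := by positivity
          calc 16 * π ^ 2 / 3 = 16 * π ^ 2 / 3 * 1 := by ring
            _ ≤ 16 * π ^ 2 / 3 * (((m 0)^2 - m 0 * m 1 + (m 1)^2 : ℤ) : ℝ) :=
                mul_le_mul_of_nonneg_left hintR hπ.le
    have harea : flatTorusArea !![1, 1/2; 0, Real.sqrt 3 / 2] = Real.sqrt 3 / 2 := by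
      unfold flatTorusArea
      rw [Matrix.det_fin_two_of]
      rw [abs_of_pos (by simp only [one_mul, mul_zero, sub_zero]; positivity)]
      norm_num
    rw [hlam, harea, eq_div_iff s3ne]
    linear_combination (16 * π ^ 2 / 6) * s3sq
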